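/- If G is a 2k-regular multigraph, then its edge set can be decomposed into k edge-disjoint 2-factors. -/

import Mathlib

set_option linter.unusedSectionVars false

section Aux

variable {V : Type*} [Fintype V] [DecidableEq V]

private def rtl {n : ℕ} (o : Fin n → V × V) (g : Fin n → Bool) (i : Fin n) : V :=
  if g i then (o i).1 else (o i).2

private def rhd {n : ℕ} (o : Fin n → V × V) (g : Fin n → Bool) (i : Fin n) : V :=
  if g i then (o i).2 else (o i).1

private lemma rtl_ne_rhd {n : ℕ} (o : Fin n → V × V) (hl : ∀ i, (o i).1 ≠ (o i).2)
    (g : Fin n → Bool) (i : Fin n) : rtl o g i ≠ rhd o g i := by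
  unfold rtl rhd
  split
  · exact hl i
  · exact (hl i).symm

private lemma rtl_update {n : ℕ} (o : Fin n → V × V) (g : Fin n → Bool) (i : Fin n) (b : Bool)
    {j : Fin n} (h : j ≠ i) : rtl o (Function.update g i b) j = rtl o g j := by
  unfold rtl; rw [Function.update_of_ne h]

private lemma rhd_update {n : ℕ} (o : Fin n → V × V) (g : Fin n → Bool) (i : Fin n) (b : Bool)
    {j : Fin n} (h : j ≠ i) : rhd o (Function.update g i b) j = rhd o g j := by
  unfold rhd; rw [Function.update_of_ne h]

private lemma ite_eq_comm' {α : Type*} [DecidableEq α] (x y : α) :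
    (if x = y then (1:ℕ) else 0) = if y = x then 1 else 0 := by
  by_cases h : x = y
  · simp [h]
  · simp [h, Ne.symm h]

private lemma card_filter_erase {n : ℕ} (s : Finset (Fin n)) (i : Fin n) (hi : i ∈ s)
    (P : Fin n → Prop) [DecidablePred P] :
    (s.filter P).card = ((s.erase i).filter P).card + if P i then 1 else 0 := by
  conv_lhs => rw [← Finset.insert_erase hi]
  rw [Finset.filter_insert]
  split
  · rw [Finset.card_insert_of_notMem (by simp)]
  · rfl

/-- Euler-type lemma: orientations balanced up to virtual half-edges at `a`, `b`. -/
private lemma exists_balanced {n : ℕ} (o : Fin n → V × V) (hl : ∀ i, (o i).1 ≠ (o i).2) :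
    ∀ (m : ℕ) (s : Finset (Fin n)), s.card = m → ∀ a b : V,
    (∀ v, Even ((s.filter (fun i => (o i).1 = v ∨ (o i).2 = v)).card
        + (if v = a then 1 else 0) + (if v = b then 1 else 0))) →
    ∃ g : Fin n → Bool, ∀ v,
      (s.filter (fun i => rtl o g i = v)).card + (if v = a then 1 else 0)
        = (s.filter (fun i => rhd o g i = v)).card + (if v = b then 1 else 0) := by
  intro m
  induction m with
  | zero =>
    intro s hs a b hE
    rw [Finset.card_eq_zero] at hs
    subst hs
    have hab : a = b := by
      by_contra hab
      have := hE a
      simp [hab] at this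
    subst hab
    exact ⟨fun _ => true, fun v => by simp⟩
  | succ m ih =>
    intro s hs a b hE
    by_cases hab : a = b
    · -- all degrees even: start a closed trail with any edge
      subst hab
      have hsne : s.Nonempty := Finset.card_pos.mp (by omega)
      obtain ⟨i, hi⟩ := hsne
      have hxy : (o i).1 ≠ (o i).2 := hl i
      have hcard' : (s.erase i).card = m := by
        rw [Finset.card_erase_of_mem hi, hs]
        omega
      have hE' : ∀ v, Even (((s.erase i).filter (fun j => (o j).1 = v ∨ (o j).2 = v)).card
          + (if v = (o i).1 then 1 else 0) + (if v = (o i).2 then 1 else 0)) := by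
        intro v
        have h0 := hE v
        have h1 := card_filter_erase s i hi (fun j => (o j).1 = v ∨ (o j).2 = v)
        have h2 : (if ((o i).1 = v ∨ (o i).2 = v) then (1:ℕ) else 0)
            = (if v = (o i).1 then 1 else 0) + (if v = (o i).2 then 1 else 0) := by
          rcases eq_or_ne v (o i).1 with rfl | h3
          · rw [if_pos (Or.inl rfl), if_pos rfl, if_neg hxy]
          · rcases eq_or_ne v (o i).2 with rfl | h4
            · rw [if_pos (Or.inr rfl), if_neg h3, if_pos rfl]
            · rw [if_neg (by rintro (h | h) <;> [exact h3 h.symm; exact h4 h.symm]),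
                if_neg h3, if_neg h4]
        rw [h2] at h1
        rw [Nat.even_iff] at h0 ⊢
        split_ifs at h0 h1 ⊢ <;> omega
      obtain ⟨g', hg'⟩ := ih (s.erase i) hcard' (o i).1 (o i).2 hE'
      refine ⟨Function.update g' i true, fun v => ?_⟩
      have htl : ((s.erase i).filter (fun j => rtl o (Function.update g' i true) j = v))
          = ((s.erase i).filter (fun j => rtl o g' j = v)) :=
        Finset.filter_congr (fun j hj => by
          rw [rtl_update o g' i true (Finset.ne_of_mem_erase hj)])
      have hhd : ((s.erase i).filter (fun j => rhd o (Function.update g' i true) j = v))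
          = ((s.erase i).filter (fun j => rhd o g' j = v)) :=
        Finset.filter_congr (fun j hj => by
          rw [rhd_update o g' i true (Finset.ne_of_mem_erase hj)])
      have h1 := card_filter_erase s i hi (fun j => rtl o (Function.update g' i true) j = v)
      have h2 := card_filter_erase s i hi (fun j => rhd o (Function.update g' i true) j = v)
      rw [htl] at h1
      rw [hhd] at h2
      have h3 : rtl o (Function.update g' i true) i = (o i).1 := by
        unfold rtl; rw [Function.update_self]; simp
      have h4 : rhd o (Function.update g' i true) i = (o i).2 := by
        unfold rhd; rw [Function.update_self]; simp
      rw [h3] at h1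
      rw [h4] at h2
      have h5 := ite_eq_comm' (o i).1 v
      have h6 := ite_eq_comm' (o i).2 v
      have h7 := hg' v
      omega
    · -- a ≠ b : degree of a is odd, pick an edge at a
      have hda : (s.filter (fun j => (o j).1 = a ∨ (o j).2 = a)).card % 2 = 1 := by
        have h0 := hE a
        rw [Nat.even_iff] at h0
        rw [if_pos rfl, if_neg hab] at h0
        omega
      have hne : (s.filter (fun j => (o j).1 = a ∨ (o j).2 = a)).Nonempty :=
        Finset.card_pos.mp (by omega)
      obtain ⟨i, hi'⟩ := hne
      rw [Finset.mem_filter] at hi'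
      obtain ⟨hi, hia⟩ := hi'
      obtain ⟨w, bi, hwa, hrtl, hrhd⟩ : ∃ (w : V) (bi : Bool), w ≠ a ∧
          (if bi then (o i).1 else (o i).2) = w ∧ (if bi then (o i).2 else (o i).1) = a := by
        rcases hia with h | h
        · exact ⟨(o i).2, false, fun hc => hl i (h.trans hc.symm), by simp, by simp [h]⟩
        · exact ⟨(o i).1, true, fun hc => hl i (hc.trans h.symm), by simp, by simp [h]⟩
      have hcard' : (s.erase i).card = m := by
        rw [Finset.card_erase_of_mem hi, hs]
        omega
      have hedge : ∀ v, ((o i).1 = v ∨ (o i).2 = v) ↔ (v = a ∨ v = w) := by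
        intro v
        cases bi <;> simp only [if_true, if_false, Bool.false_eq_true, ite_true,
          ite_false] at hrtl hrhd <;> rw [← hrtl, ← hrhd] <;>
          (constructor <;> rintro (h | h) <;>
            first | exact Or.inl h.symm | exact Or.inr h.symm)
      have hE' : ∀ v, Even (((s.erase i).filter (fun j => (o j).1 = v ∨ (o j).2 = v)).card
          + (if v = w then 1 else 0) + (if v = b then 1 else 0)) := by
        intro v
        have h0 := hE v
        have h1 := card_filter_erase s i hi (fun j => (o j).1 = v ∨ (o j).2 = v)
        have h2 : (if ((o i).1 = v ∨ (o i).2 = v) then (1:ℕ) else 0)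
            = (if v = a then 1 else 0) + (if v = w then 1 else 0) := by
          rcases eq_or_ne v a with rfl | h3
          · rw [if_pos ((hedge v).mpr (Or.inl rfl)), if_pos rfl, if_neg (Ne.symm hwa)]
          · rcases eq_or_ne v w with rfl | h4
            · rw [if_pos ((hedge v).mpr (Or.inr rfl)), if_neg h3, if_pos rfl]
            · rw [if_neg (fun h => ((hedge v).mp h).elim h3 h4), if_neg h3, if_neg h4]
        rw [h2] at h1
        rw [Nat.even_iff] at h0 ⊢
        split_ifs at h0 h1 ⊢ <;> omega
      obtain ⟨g', hg'⟩ := ih (s.erase i) hcard' w b hE'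
      refine ⟨Function.update g' i bi, fun v => ?_⟩
      have htl : ((s.erase i).filter (fun j => rtl o (Function.update g' i bi) j = v))
          = ((s.erase i).filter (fun j => rtl o g' j = v)) :=
        Finset.filter_congr (fun j hj => by
          rw [rtl_update o g' i bi (Finset.ne_of_mem_erase hj)])
      have hhd : ((s.erase i).filter (fun j => rhd o (Function.update g' i bi) j = v))
          = ((s.erase i).filter (fun j => rhd o g' j = v)) :=
        Finset.filter_congr (fun j hj => by
          rw [rhd_update o g' i bi (Finset.ne_of_mem_erase hj)])
      have h1 := card_filter_erase s i hi (fun j => rtl o (Function.update g' i bi) j = v)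
      have h2 := card_filter_erase s i hi (fun j => rhd o (Function.update g' i bi) j = v)
      rw [htl] at h1
      rw [hhd] at h2
      have h3 : rtl o (Function.update g' i bi) i = w := by
        unfold rtl; rw [Function.update_self]; exact hrtl
      have h4 : rhd o (Function.update g' i bi) i = a := by
        unfold rhd; rw [Function.update_self]; exact hrhd
      rw [h3] at h1
      rw [h4] at h2
      have h5 := ite_eq_comm' w v
      have h6 := ite_eq_comm' a v
      have h7 := hg' v
      omega

/-- Coloring lemma: `k`-in-`k`-out-regular directed multigraphs decompose into
`k` classes where each vertex has in- and out-degree exactly 1 in each class. -/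
private lemma exists_coloring {n : ℕ} (p : Fin n → V × V) :
    ∀ (k : ℕ) (s : Finset (Fin n)),
    (∀ v, (s.filter (fun i => (p i).1 = v)).card = k) →
    (∀ v, (s.filter (fun i => (p i).2 = v)).card = k) →
    ∃ f : Fin n → ℕ, (∀ i ∈ s, f i < k) ∧
      ∀ c < k, ∀ v,
        (s.filter (fun i => f i = c ∧ (p i).1 = v)).card = 1 ∧
        (s.filter (fun i => f i = c ∧ (p i).2 = v)).card = 1 := by
  intro k
  induction k with
  | zero =>
    intro s hout _hin
    have hse : s = ∅ := by
      rw [Finset.eq_empty_iff_forall_notMem]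
      intro i hi
      have h1 := hout (p i).1
      have h2 : i ∈ s.filter (fun j => (p j).1 = (p i).1) := Finset.mem_filter.mpr ⟨hi, rfl⟩
      rw [Finset.card_eq_zero] at h1
      rw [h1] at h2
      exact absurd h2 (Finset.notMem_empty i)
    subst hse
    exact ⟨fun _ => 0, fun i hi => absurd hi (Finset.notMem_empty i), fun c hc => by omega⟩
  | succ k ih =>
    intro s hout hin
    -- Hall's condition
    set t : V → Finset V := fun v => (s.filter (fun i => (p i).1 = v)).image (fun i => (p i).2)
      with ht
    have hall : ∀ A : Finset V, A.card ≤ (A.biUnion t).card := by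
      intro A
      set N := A.biUnion t with hN
      have hU : s.filter (fun i => (p i).1 ∈ A)
          = A.biUnion (fun v => s.filter (fun i => (p i).1 = v)) := by
        ext i
        simp only [Finset.mem_filter, Finset.mem_biUnion]
        constructor
        · rintro ⟨h1, h2⟩; exact ⟨(p i).1, h2, h1, rfl⟩
        · rintro ⟨v, hv, h1, h2⟩; exact ⟨h1, h2 ▸ hv⟩
      have hU2 : s.filter (fun i => (p i).2 ∈ N)
          = N.biUnion (fun v => s.filter (fun i => (p i).2 = v)) := by
        ext i
        simp only [Finset.mem_filter, Finset.mem_biUnion]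
        constructor
        · rintro ⟨h1, h2⟩; exact ⟨(p i).2, h2, h1, rfl⟩
        · rintro ⟨v, hv, h1, h2⟩; exact ⟨h1, h2 ▸ hv⟩
      have hd1 : (s.filter (fun i => (p i).1 ∈ A)).card = (k+1) * A.card := by
        rw [hU, Finset.card_biUnion]
        · rw [Finset.sum_congr rfl (fun v _ => hout v), Finset.sum_const, smul_eq_mul, mul_comm]
        · intro v _ w _ hvw
          simp only [Function.onFun]; rw [Finset.disjoint_left]
          rintro i hi1 hi2
          rw [Finset.mem_filter] at hi1 hi2
          exact hvw (hi1.2 ▸ hi2.2 ▸ rfl)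
      have hd2 : (s.filter (fun i => (p i).2 ∈ N)).card = (k+1) * N.card := by
        rw [hU2, Finset.card_biUnion]
        · rw [Finset.sum_congr rfl (fun v _ => hin v), Finset.sum_const, smul_eq_mul, mul_comm]
        · intro v _ w _ hvw
          simp only [Function.onFun]; rw [Finset.disjoint_left]
          rintro i hi1 hi2
          rw [Finset.mem_filter] at hi1 hi2
          exact hvw (hi1.2 ▸ hi2.2 ▸ rfl)
      have hsub : s.filter (fun i => (p i).1 ∈ A) ⊆ s.filter (fun i => (p i).2 ∈ N) := by
        intro i hi
        rw [Finset.mem_filter] at hi ⊢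
        refine ⟨hi.1, ?_⟩
        rw [hN, Finset.mem_biUnion]
        refine ⟨(p i).1, hi.2, ?_⟩
        rw [ht]
        exact Finset.mem_image.mpr ⟨i, Finset.mem_filter.mpr ⟨hi.1, rfl⟩, rfl⟩
      have hle := Finset.card_le_card hsub
      rw [hd1, hd2] at hle
      exact Nat.le_of_mul_le_mul_left hle (Nat.succ_pos k)
    obtain ⟨fV, hfinj, hfmem⟩ :=
      (Finset.all_card_le_biUnion_card_iff_exists_injective t).mp hall
    have hfsurj : Function.Surjective fV := Finite.surjective_of_injective hfinj
    have hex : ∀ v, ∃ i, i ∈ s ∧ (p i).1 = v ∧ (p i).2 = fV v := by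
      intro v
      have hm := hfmem v
      rw [ht] at hm
      rw [Finset.mem_image] at hm
      obtain ⟨i, hi, hi2⟩ := hm
      rw [Finset.mem_filter] at hi
      exact ⟨i, hi.1, hi.2, hi2⟩
    choose e he1 he2 he3 using hex
    set M : Finset (Fin n) := Finset.univ.image e with hM
    have hMs : M ⊆ s := by
      intro i hi
      rw [hM, Finset.mem_image] at hi
      obtain ⟨v, _, rfl⟩ := hi
      exact he1 v
    have hMtl : ∀ v, M.filter (fun i => (p i).1 = v) = {e v} := by
      intro v
      ext i
      simp only [Finset.mem_filter, hM, Finset.mem_image, Finset.mem_singleton]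
      constructor
      · rintro ⟨⟨u, _, rfl⟩, h2⟩
        rw [he2 u] at h2
        rw [h2]
      · rintro rfl
        exact ⟨⟨v, Finset.mem_univ v, rfl⟩, he2 v⟩
    have hMhd : ∀ v, (M.filter (fun i => (p i).2 = v)).card = 1 := by
      intro v
      obtain ⟨u, rfl⟩ := hfsurj v
      rw [Finset.card_eq_one]
      refine ⟨e u, ?_⟩
      ext i
      simp only [Finset.mem_filter, hM, Finset.mem_image, Finset.mem_singleton]
      constructor
      · rintro ⟨⟨w, _, rfl⟩, h2⟩
        rw [he3 w] at h2
        rw [hfinj h2]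
      · rintro rfl
        exact ⟨⟨u, Finset.mem_univ u, rfl⟩, he3 u⟩
    have hsun : s \ M ∪ M = s := Finset.sdiff_union_of_subset hMs
    have hout' : ∀ v, ((s \ M).filter (fun i => (p i).1 = v)).card = k := by
      intro v
      have h2 : (s.filter (fun i => (p i).1 = v)).card
          = ((s \ M).filter (fun i => (p i).1 = v)).card
            + (M.filter (fun i => (p i).1 = v)).card := by
        conv_lhs => rw [← hsun]
        rw [Finset.filter_union,
          Finset.card_union_of_disjoint (Finset.disjoint_filter_filter Finset.sdiff_disjoint)]
      rw [hout v, hMtl v, Finset.card_singleton] at h2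
      omega
    have hin' : ∀ v, ((s \ M).filter (fun i => (p i).2 = v)).card = k := by
      intro v
      have h2 : (s.filter (fun i => (p i).2 = v)).card
          = ((s \ M).filter (fun i => (p i).2 = v)).card
            + (M.filter (fun i => (p i).2 = v)).card := by
        conv_lhs => rw [← hsun]
        rw [Finset.filter_union,
          Finset.card_union_of_disjoint (Finset.disjoint_filter_filter Finset.sdiff_disjoint)]
      rw [hin v, hMhd v] at h2
      omega
    obtain ⟨f', hb', hc'⟩ := ih (s \ M) hout' hin'
    refine ⟨fun i => if i ∈ M then 0 else f' i + 1, ?_, ?_⟩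
    · intro i hi
      by_cases hiM : i ∈ M
      · simp [hiM]
      · have hb := hb' i (Finset.mem_sdiff.mpr ⟨hi, hiM⟩)
        simp only [hiM, if_false, if_neg]
        omega
    · intro c hc v
      rcases Nat.eq_zero_or_pos c with rfl | hcpos
      · have key : ∀ (q : Fin n → V) (u : V),
            s.filter (fun i => (if i ∈ M then 0 else f' i + 1) = 0 ∧ q i = u)
              = M.filter (fun i => q i = u) := by
          intro q u
          ext i
          simp only [Finset.mem_filter]
          constructor
          · rintro ⟨h1, h2, h3⟩
            by_cases hiM : i ∈ M
            · exact ⟨hiM, h3⟩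
            · simp [hiM] at h2
          · rintro ⟨h1, h2⟩
            exact ⟨hMs h1, by simp [h1], h2⟩
        constructor
        · rw [key (fun i => (p i).1) v, hMtl v, Finset.card_singleton]
        · rw [key (fun i => (p i).2) v]
          exact hMhd v
      · obtain ⟨c', rfl⟩ : ∃ c', c = c' + 1 := ⟨c - 1, by omega⟩
        have hck : c' < k := by omega
        have key : ∀ (q : Fin n → V) (u : V),
            s.filter (fun i => (if i ∈ M then 0 else f' i + 1) = c' + 1 ∧ q i = u)
              = (s \ M).filter (fun i => f' i = c' ∧ q i = u) := by
          intro q u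
          ext i
          simp only [Finset.mem_filter, Finset.mem_sdiff]
          constructor
          · rintro ⟨h1, h2, h3⟩
            by_cases hiM : i ∈ M
            · simp [hiM] at h2
            · simp only [hiM, if_false, if_neg] at h2
              exact ⟨⟨h1, hiM⟩, by omega, h3⟩
          · rintro ⟨⟨h1, h1'⟩, h2, h3⟩
            refine ⟨h1, ?_, h3⟩
            simp [h1', h2]
        constructor
        · rw [key (fun i => (p i).1) v]
          exact (hc' c' hck v).1
        · rw [key (fun i => (p i).2) v]
          exact (hc' c' hck v).2

private lemma card_filter_get {α : Type*} (l : List α) (p : α → Prop) [DecidablePred p] :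
    ((Finset.univ : Finset (Fin l.length)).filter (fun i => p (l.get i))).card
      = (l.filter (fun a => decide (p a))).length := by
  rw [Finset.card_filter]
  induction l with
  | nil => simp
  | cons a tl ih =>
    have hs : (∑ i : Fin (a :: tl).length, if p ((a :: tl).get i) then (1:ℕ) else 0)
        = (if p a then 1 else 0) + ∑ i : Fin tl.length, if p (tl.get i) then 1 else 0 :=
      Fin.sum_univ_succ _
    rw [hs, ih, List.filter_cons]
    by_cases h : p a
    · rw [if_pos h, if_pos (by simpa using h), List.length_cons]
      omega
    · rw [if_neg h, if_neg (by simpa using h)]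
      omega

end Aux

/-- The degree of a vertex `v` in a multigraph given as a list of (non-loop) edges:
the number of edges incident to `v`, counted with multiplicity. -/
def mdeg {V : Type*} [DecidableEq V] (D : List (V × V)) (v : V) : ℕ :=
  (D.filter (fun p => p.1 = v ∨ p.2 = v)).length

/-- **Petersen's 2-factor theorem.** If every vertex of a (loopless) multigraph `D`
has degree exactly `2 * k`, then the edges of `D` can be partitioned into `k`
classes (a coloring `f` of the edges), each of which is a 2-factor, i.e. each
vertex is incident to exactly 2 edges of each class. -/
theorem petersen_two_factor {V : Type*} [Fintype V] [DecidableEq V]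
    (k : ℕ) (D : List (V × V)) (hloop : ∀ p ∈ D, p.1 ≠ p.2)
    (hreg : ∀ v : V, mdeg D v = 2 * k) :
    ∃ f : Fin D.length → Fin k,
      ∀ (c : Fin k) (v : V),
        ((Finset.univ : Finset (Fin D.length)).filter
          (fun i => f i = c ∧ ((D.get i).1 = v ∨ (D.get i).2 = v))).card = 2 := by
  classical
  cases isEmpty_or_nonempty V with
  | inl hVe =>
    have hD : D = [] := by
      cases D with
      | nil => rfl
      | cons a tl => exact (hVe.false a.1).elim
    subst hD
    exact ⟨fun i => i.elim0, fun c v => (hVe.false v).elim⟩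
  | inr hVne =>
    have hl : ∀ i : Fin D.length, (D.get i).1 ≠ (D.get i).2 :=
      fun i => hloop (D.get i) (D.get_mem i)
    have hdeg : ∀ v, ((Finset.univ : Finset (Fin D.length)).filter
        (fun i => (D.get i).1 = v ∨ (D.get i).2 = v)).card = 2 * k := by
      intro v
      rw [card_filter_get D (fun q => q.1 = v ∨ q.2 = v)]
      exact hreg v
    obtain ⟨a⟩ := hVne
    obtain ⟨g, hg⟩ := exists_balanced D.get hl (Finset.univ.card) Finset.univ rfl a a
      (fun v => by
        rw [hdeg v]
        rcases eq_or_ne v a with rfl | h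
        · simp [parity_simps]
        · simp [h, parity_simps])
    have houtin : ∀ v,
        ((Finset.univ : Finset (Fin D.length)).filter (fun i => rtl D.get g i = v)).card = k ∧
        ((Finset.univ : Finset (Fin D.length)).filter (fun i => rhd D.get g i = v)).card = k := by
      intro v
      have hunion : (Finset.univ : Finset (Fin D.length)).filter (fun i => rtl D.get g i = v)
          ∪ (Finset.univ : Finset (Fin D.length)).filter (fun i => rhd D.get g i = v)
          = (Finset.univ : Finset (Fin D.length)).filter
              (fun i => (D.get i).1 = v ∨ (D.get i).2 = v) := by
        ext i
        simp only [Finset.mem_union, Finset.mem_filter, Finset.mem_univ, true_and]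
        unfold rtl rhd
        cases g i <;> simp <;> exact or_comm
      have hdisj : Disjoint
          ((Finset.univ : Finset (Fin D.length)).filter (fun i => rtl D.get g i = v))
          ((Finset.univ : Finset (Fin D.length)).filter (fun i => rhd D.get g i = v)) := by
        rw [Finset.disjoint_left]
        intro i h1 h2
        rw [Finset.mem_filter] at h1 h2
        exact rtl_ne_rhd D.get hl g i (h1.2.trans h2.2.symm)
      have hsum := Finset.card_union_of_disjoint hdisj
      rw [hunion, hdeg v] at hsum
      have hbal := hg v
      constructor <;> omega
    obtain ⟨f, hb, hcards⟩ := exists_coloring (fun i => (rtl D.get g i, rhd D.get g i)) k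
      Finset.univ (fun v => (houtin v).1) (fun v => (houtin v).2)
    refine ⟨fun i => ⟨f i, hb i (Finset.mem_univ i)⟩, ?_⟩
    intro c v
    have h1c : ((Finset.univ : Finset (Fin D.length)).filter
        (fun i => f i = (c : ℕ) ∧ rtl D.get g i = v)).card = 1 := (hcards (c : ℕ) c.isLt v).1
    have h2c : ((Finset.univ : Finset (Fin D.length)).filter
        (fun i => f i = (c : ℕ) ∧ rhd D.get g i = v)).card = 1 := (hcards (c : ℕ) c.isLt v).2
    have hdisj : Disjoint
        ((Finset.univ : Finset (Fin D.length)).filter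
          (fun i => f i = (c : ℕ) ∧ rtl D.get g i = v))
        ((Finset.univ : Finset (Fin D.length)).filter
          (fun i => f i = (c : ℕ) ∧ rhd D.get g i = v)) := by
      rw [Finset.disjoint_left]
      intro i h1 h2
      rw [Finset.mem_filter] at h1 h2
      exact rtl_ne_rhd D.get hl g i (h1.2.2.trans h2.2.2.symm)
    have hsplit : (Finset.univ : Finset (Fin D.length)).filter
          (fun i => (⟨f i, hb i (Finset.mem_univ i)⟩ : Fin k) = c
            ∧ ((D.get i).1 = v ∨ (D.get i).2 = v))
        = (Finset.univ : Finset (Fin D.length)).filter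
            (fun i => f i = (c : ℕ) ∧ rtl D.get g i = v)
          ∪ (Finset.univ : Finset (Fin D.length)).filter
            (fun i => f i = (c : ℕ) ∧ rhd D.get g i = v) := by
      ext i
      simp only [Finset.mem_union, Finset.mem_filter, Finset.mem_univ, true_and]
      have ha : ((⟨f i, hb i (Finset.mem_univ i)⟩ : Fin k) = c) ↔ f i = (c : ℕ) := by
        rw [Fin.ext_iff]
      have hb2 : ((D.get i).1 = v ∨ (D.get i).2 = v)
          ↔ (rtl D.get g i = v ∨ rhd D.get g i = v) := by
        unfold rtl rhd
        cases g i <;> simp <;> exact or_comm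
      rw [ha, hb2, and_or_left]
    rw [hsplit, Finset.card_union_of_disjoint hdisj, h1c, h2c]
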